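/- Let m : ℝ × (0,∞) → ℝ be C¹, and let 𝔤 be the generalised Vaidya metric as above. The vector field X = v∂_v + r∂_r satisfies (L_X 𝔤)_{μν} = 2·𝔤_{μν} (i.e., X is homothetic) if and only if m_{,r} + (v/r)·m_{,v} − m/r = 0 for all v and r > 0. -/

import Mathlib

open Matrix

/-- Partial derivative in the α-th coordinate direction on ℝ⁴. -/
noncomputable def pd4 (f : (Fin 4 → ℝ) → ℝ) (α : Fin 4) (p : Fin 4 → ℝ) : ℝ :=
  deriv (fun t => f (Function.update p α t)) (p α)

/-- Lie derivative of a metric `G` along a vector field `X`: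
`(L_X G)_{μν} = X^α ∂_α G_{μν} + G_{αν} ∂_μ X^α + G_{μα} ∂_ν X^α`. -/
noncomputable def lieDeriv (X : (Fin 4 → ℝ) → Fin 4 → ℝ)
    (G : (Fin 4 → ℝ) → Matrix (Fin 4) (Fin 4) ℝ) (μ ν : Fin 4) (p : Fin 4 → ℝ) : ℝ :=
  (∑ α, X p α * pd4 (fun q => G q μ ν) α p)
    + (∑ α, G p α ν * pd4 (fun q => X q α) μ p)
    + (∑ α, G p μ α * pd4 (fun q => X q α) ν p)

/-- The generalised Vaidya metric as a matrix field on ℝ⁴ with coordinates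
`p = (v, r, θ, φ)`. -/
noncomputable def vaidyaG (m : ℝ → ℝ → ℝ) (p : Fin 4 → ℝ) : Matrix (Fin 4) (Fin 4) ℝ :=
  !![-(1 - 2 * m (p 0) (p 1) / p 1), -1, 0, 0;
     -1, 0, 0, 0;
     0, 0, (p 1) ^ 2, 0;
     0, 0, 0, (p 1) ^ 2 * Real.sin (p 2) ^ 2]

/-- The homothetic Killing candidate `X = v ∂_v + r ∂_r`. -/
def homVec (p : Fin 4 → ℝ) : Fin 4 → ℝ := ![p 0, p 1, 0, 0]

/-- The (0,0) component of the Lie derivative of the Vaidya metric along `homVec`. -/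
lemma vaidya_key00 (m : ℝ → ℝ → ℝ) (p : Fin 4 → ℝ) (hp : 0 < p 1)
    (hdv : DifferentiableAt ℝ (fun w => m w (p 1)) (p 0))
    (hdr : DifferentiableAt ℝ (fun s => m (p 0) s) (p 1)) :
    lieDeriv homVec (vaidyaG m) 0 0 p = 2 * vaidyaG m p 0 0
      + 2 * (deriv (fun s => m (p 0) s) (p 1)
          + (p 0 / p 1) * deriv (fun w => m w (p 1)) (p 0) - m (p 0) (p 1) / p 1) := by
  have hr : p 1 ≠ 0 := hp.ne'
  have L1 : deriv (fun t => 2 * m t (p 1) / p 1 - 1) (p 0)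
      = 2 * deriv (fun w => m w (p 1)) (p 0) / p 1 := by
    rw [deriv_sub_const, deriv_div_const, deriv_const_mul 2 hdv]
  have L2 : deriv (fun t => 2 * m (p 0) t / t - 1) (p 1)
      = (2 * deriv (fun s => m (p 0) s) (p 1) * p 1 - 2 * m (p 0) (p 1)) / (p 1) ^ 2 := by
    have h3 : HasDerivAt (fun s => 2 * m (p 0) s / s)
        ((2 * deriv (fun s => m (p 0) s) (p 1) * p 1 - 2 * m (p 0) (p 1) * 1) / (p 1) ^ 2)
        (p 1) := (hdr.hasDerivAt.const_mul 2).div (hasDerivAt_id (p 1)) hr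
    rw [(h3.sub_const 1).deriv]; ring
  simp only [lieDeriv, pd4, Fin.sum_univ_four, vaidyaG, homVec]
  simp [Function.update_self, Function.update_of_ne]
  rw [show deriv (fun x => 2 * m (p 0) x / x) (p 1) = _ from
    ((hdr.hasDerivAt.const_mul 2).div (hasDerivAt_id' (x := p 1)) hr).deriv]
  field_simp
  ring

/-- `X = v∂_v + r∂_r` is homothetic (`L_X 𝔤 = 2𝔤`) for the
generalised Vaidya metric iff `m_,r + (v/r) m_,v − m/r = 0` for all `v`, `r > 0`. -/
theorem stmt_15 (m : ℝ → ℝ → ℝ)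
    (hm : ContDiffOn ℝ 1 (fun p : ℝ × ℝ => m p.1 p.2) {p : ℝ × ℝ | 0 < p.2}) :
    (∀ p : Fin 4 → ℝ, 0 < p 1 → ∀ μ ν : Fin 4,
        lieDeriv homVec (vaidyaG m) μ ν p = 2 * vaidyaG m p μ ν)
      ↔ (∀ v r : ℝ, 0 < r →
          deriv (fun s => m v s) r + (v / r) * deriv (fun w => m w r) v
            - m v r / r = 0) := by
  have hop : IsOpen {p : ℝ × ℝ | 0 < p.2} := isOpen_lt continuous_const continuous_snd
  have hdiff : ∀ v r : ℝ, 0 < r →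
      DifferentiableAt ℝ (fun p : ℝ × ℝ => m p.1 p.2) (v, r) := fun v r hr =>
    (hm.differentiableOn one_ne_zero).differentiableAt (hop.mem_nhds hr)
  have hdv : ∀ v r : ℝ, 0 < r → DifferentiableAt ℝ (fun w => m w r) v := fun v r hr =>
    (hdiff v r hr).comp (f := fun w : ℝ => (w, r)) v (DifferentiableAt.prodMk differentiableAt_id (differentiableAt_const r))
  have hdr : ∀ v r : ℝ, 0 < r → DifferentiableAt ℝ (fun s => m v s) r := fun v r hr =>
    (hdiff v r hr).comp (f := fun s : ℝ => (v, s)) r (DifferentiableAt.prodMk (differentiableAt_const v) (differentiableAt_id))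
  constructor
  · intro h v r hr
    set p : Fin 4 → ℝ := ![v, r, 0, 0] with hpdef
    have hp0 : p 0 = v := rfl
    have hp1 : p 1 = r := rfl
    have hkey := vaidya_key00 m p (by rw [hp1]; exact hr)
      (by rw [hp0, hp1]; exact hdv v r hr) (by rw [hp0, hp1]; exact hdr v r hr)
    have h00 := h p (by rw [hp1]; exact hr) 0 0
    rw [h00] at hkey
    rw [hp0, hp1] at hkey
    linarith
  · intro h p hp μ ν
    fin_cases μ <;> fin_cases ν
    · -- (0,0)
      have hkey := vaidya_key00 m p hp (hdv (p 0) (p 1) hp) (hdr (p 0) (p 1) hp)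
      have hpde := h (p 0) (p 1) hp
      simpa [hpde] using hkey
    all_goals (
      simp only [lieDeriv, pd4, Fin.sum_univ_four, vaidyaG, homVec] <;>
      simp [Function.update_self, Function.update_of_ne, Matrix.vecHead, Matrix.vecTail] <;>
      ring)
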